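/- Let 0 ≤ α < n, δ > 0, and let Ψ : ℝⁿ → ℝⁿ be a C^{1,δ} diffeomorphism with c ≤ ‖DΨ(x)v‖/‖v‖ ≤ C for all x and all nonzero v. Define the error kernel E(x,y) = (Ψ(y)-Ψ(x))/|Ψ(y)-Ψ(x)|^{n+1-α} - DΨ(x)(y-x)/|Ψ(y)-Ψ(x)|^{n+1-α}. Then there is a constant M such that |E(x,y)| ≤ M |y-x|^{α-n+δ} for all x ≠ y with |y-x| ≤ 1. -/

import Mathlib

/-- The error kernel obtained by replacing the phase `Ψ(y) - Ψ(x)` in the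
pullback Riesz kernel by its tangent-plane approximation `DΨ(x)(y-x)` satisfies
the improved local estimate `|E(x,y)| ≤ M |y-x|^{α-n+δ}` for `|y-x| ≤ 1`. -/
theorem error_kernel_improved_estimate {n : ℕ} (hn : 0 < n)
    (α : ℝ) (hα0 : 0 ≤ α) (hαn : α < n)
    (δ : ℝ) (hδ0 : 0 < δ) (hδ1 : δ ≤ 1)
    (Ψ : EuclideanSpace ℝ (Fin n) → EuclideanSpace ℝ (Fin n))
    (hbij : Function.Bijective Ψ) (hdiff : Differentiable ℝ Ψ)
    (Mψ : ℝ)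
    (hM1 : ∀ x, ‖fderiv ℝ Ψ x‖ ≤ Mψ)
    (hM2 : ∀ x y, ‖fderiv ℝ Ψ x - fderiv ℝ Ψ y‖ ≤ Mψ * dist x y ^ δ)
    (c C : ℝ) (hc : 0 < c) (hC : 0 < C)
    (hlow : ∀ x v, c * ‖v‖ ≤ ‖fderiv ℝ Ψ x v‖)
    (hup : ∀ x v, ‖fderiv ℝ Ψ x v‖ ≤ C * ‖v‖) :
    ∃ M : ℝ, ∀ x y, x ≠ y → dist y x ≤ 1 →
      ‖(‖Ψ y - Ψ x‖ ^ ((n : ℝ) + 1 - α))⁻¹ •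
          (Ψ y - Ψ x - fderiv ℝ Ψ x (y - x))‖ ≤
        M * dist y x ^ (α - (n : ℝ) + δ) := by
  have hMψ0 : 0 ≤ Mψ := le_trans (norm_nonneg _) (hM1 0)
  -- continuity of the derivative
  have hcont : Continuous (fderiv ℝ Ψ) := by
    rw [continuous_iff_continuousAt]
    intro x
    rw [ContinuousAt, tendsto_iff_dist_tendsto_zero]
    have hb : Filter.Tendsto (fun y => Mψ * dist y x ^ δ) (nhds x) (nhds 0) := by
      have h1 : Filter.Tendsto (fun y => dist y x) (nhds x) (nhds (dist x x)) :=
        (continuous_id.dist continuous_const).tendsto x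
      rw [dist_self] at h1
      have h2 : ContinuousAt (fun t : ℝ => Mψ * t ^ δ) 0 :=
        (continuousAt_const.mul (Real.continuousAt_rpow_const 0 δ (Or.inr hδ0.le)))
      have h3 := h2.tendsto.comp h1
      simpa [Function.comp_def, Real.zero_rpow hδ0.ne'] using h3
    set_option synthInstance.maxHeartbeats 1000000 in
    refine squeeze_zero (fun y => dist_nonneg) (fun y => ?_) hb
    rw [dist_eq_norm]
    simpa [dist_comm] using hM2 y x
  have hC1 : ContDiff ℝ 1 Ψ := contDiff_one_iff_fderiv.2 ⟨hdiff, hcont⟩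
  -- each derivative is a linear equivalence
  have hinj : ∀ x, Function.Injective (fderiv ℝ Ψ x) := by
    intro x v w h
    have h1 := hlow x (v - w)
    rw [map_sub, h, sub_self, norm_zero] at h1
    have h2 : ‖v - w‖ ≤ 0 := by nlinarith [norm_nonneg (v - w)]
    have h3 := le_antisymm h2 (norm_nonneg _)
    rwa [norm_eq_zero, sub_eq_zero] at h3
  let e : EuclideanSpace ℝ (Fin n) →
      (EuclideanSpace ℝ (Fin n) ≃L[ℝ] EuclideanSpace ℝ (Fin n)) := fun x =>
    (LinearEquiv.ofBijective ((fderiv ℝ Ψ x : _ →L[ℝ] _) :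
        EuclideanSpace ℝ (Fin n) →ₗ[ℝ] EuclideanSpace ℝ (Fin n))
      ⟨hinj x, LinearMap.injective_iff_surjective.1 (hinj x)⟩).toContinuousLinearEquiv
  have he : ∀ x, ((e x : _ →L[ℝ] _) :
      EuclideanSpace ℝ (Fin n) →L[ℝ] EuclideanSpace ℝ (Fin n)) = fderiv ℝ Ψ x := by
    intro x; ext v; rfl
  have hstrict : ∀ x, HasStrictFDerivAt Ψ ((e x : _ →L[ℝ] _)) x := by
    intro x
    rw [he x]
    exact hC1.contDiffAt.hasStrictFDerivAt one_ne_zero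
  -- the global inverse
  set g : EuclideanSpace ℝ (Fin n) → EuclideanSpace ℝ (Fin n) := Function.invFun Ψ with hg
  have hgl : ∀ z, g (Ψ z) = z := Function.leftInverse_invFun hbij.1
  have hgd : ∀ x, HasFDerivAt g (((e x).symm : _ →L[ℝ] _)) (Ψ x) := fun x =>
    ((hstrict x).to_local_left_inverse (Filter.Eventually.of_forall hgl)).hasFDerivAt
  have hsymm : ∀ x w, ‖(e x).symm w‖ ≤ c⁻¹ * ‖w‖ := by
    intro x w
    have h1 := hlow x ((e x).symm w)
    have h2 : fderiv ℝ Ψ x ((e x).symm w) = w := by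
      rw [← he x]; exact (e x).apply_symm_apply w
    rw [h2] at h1
    rw [inv_mul_eq_div, le_div_iff₀ hc, mul_comm]
    exact h1
  -- inverse Lipschitz bound gives a lower bound on increments of Ψ
  have hlowinc : ∀ x y, c * ‖y - x‖ ≤ ‖Ψ y - Ψ x‖ := by
    intro x y
    have hgdiff : ∀ z ∈ (Set.univ : Set (EuclideanSpace ℝ (Fin n))),
        DifferentiableAt ℝ g z := by
      intro z _
      obtain ⟨x, rfl⟩ := hbij.2 z
      exact (hgd x).differentiableAt
    have hbound : ∀ z ∈ (Set.univ : Set (EuclideanSpace ℝ (Fin n))),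
        ‖fderiv ℝ g z‖ ≤ c⁻¹ := by
      intro z _
      obtain ⟨x, rfl⟩ := hbij.2 z
      rw [(hgd x).fderiv]
      exact ContinuousLinearMap.opNorm_le_bound _ (by positivity) (hsymm x)
    have h := convex_univ.norm_image_sub_le_of_norm_fderiv_le hgdiff hbound
      (Set.mem_univ (Ψ x)) (Set.mem_univ (Ψ y))
    rw [hgl, hgl] at h
    calc c * ‖y - x‖ ≤ c * (c⁻¹ * ‖Ψ y - Ψ x‖) :=
          mul_le_mul_of_nonneg_left h hc.le
      _ = ‖Ψ y - Ψ x‖ := by field_simp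
  -- Taylor estimate
  have htaylor : ∀ x y, ‖Ψ y - Ψ x - fderiv ℝ Ψ x (y - x)‖ ≤
      Mψ * ‖y - x‖ ^ δ * ‖y - x‖ := by
    intro x y
    have hder : ∀ z ∈ segment ℝ x y,
        HasFDerivWithinAt (fun z => Ψ z - fderiv ℝ Ψ x z)
          (fderiv ℝ Ψ z - fderiv ℝ Ψ x) (segment ℝ x y) z := fun z _ =>
      (((hdiff z).hasFDerivAt).sub (fderiv ℝ Ψ x).hasFDerivAt).hasFDerivWithinAt
    have hbound : ∀ z ∈ segment ℝ x y,
        ‖fderiv ℝ Ψ z - fderiv ℝ Ψ x‖ ≤ Mψ * ‖y - x‖ ^ δ := by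
      intro z hz
      refine le_trans (hM2 z x) ?_
      have hd : dist z x ≤ ‖y - x‖ := by
        have h1 := dist_add_dist_of_mem_segment hz
        have h2 : dist x y = ‖y - x‖ := by rw [dist_eq_norm, norm_sub_rev]
        have := dist_nonneg (x := z) (y := y)
        rw [dist_comm z x]
        linarith
      exact mul_le_mul_of_nonneg_left
        (Real.rpow_le_rpow dist_nonneg hd hδ0.le) hMψ0
    have h := (convex_segment x y).norm_image_sub_le_of_norm_hasFDerivWithin_le
      hder hbound (left_mem_segment ℝ x y) (right_mem_segment ℝ x y)
    have heq : Ψ y - fderiv ℝ Ψ x y - (Ψ x - fderiv ℝ Ψ x x) =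
        Ψ y - Ψ x - fderiv ℝ Ψ x (y - x) := by
      rw [map_sub]; abel
    rw [heq] at h
    exact h
  -- conclusion
  refine ⟨Mψ / c ^ ((n : ℝ) + 1 - α), fun x y hxy hd1 => ?_⟩
  set r : ℝ := dist y x with hr
  have hrn : r = ‖y - x‖ := dist_eq_norm y x
  have hr0 : 0 < r := dist_pos.2 (Ne.symm hxy)
  set s : ℝ := ‖Ψ y - Ψ x‖ with hs
  have hcr : c * r ≤ s := by rw [hrn]; exact hlowinc x y
  have hcr0 : 0 < c * r := by positivity
  set ee : ℝ := (n : ℝ) + 1 - α with hee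
  have hee0 : 0 < ee := by simp only [hee]; linarith
  have hse : (c * r) ^ ee ≤ s ^ ee := Real.rpow_le_rpow hcr0.le hcr hee0.le
  have hcre0 : 0 < (c * r) ^ ee := Real.rpow_pos_of_pos hcr0 ee
  have hinv : (s ^ ee)⁻¹ ≤ ((c * r) ^ ee)⁻¹ := by
    apply inv_anti₀ hcre0 hse
  rw [norm_smul, Real.norm_eq_abs, abs_of_nonneg (by positivity)]
  have hnum : ‖Ψ y - Ψ x - fderiv ℝ Ψ x (y - x)‖ ≤ Mψ * r ^ δ * r := by
    rw [hrn]; exact htaylor x y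
  calc (s ^ ee)⁻¹ * ‖Ψ y - Ψ x - fderiv ℝ Ψ x (y - x)‖
      ≤ ((c * r) ^ ee)⁻¹ * (Mψ * r ^ δ * r) :=
        mul_le_mul hinv hnum (norm_nonneg _) (by positivity)
    _ = Mψ / c ^ ee * r ^ (α - (n : ℝ) + δ) := by
        have h1 : Mψ * r ^ δ * r = Mψ * r ^ (δ + 1) := by
          rw [Real.rpow_add hr0, Real.rpow_one, mul_assoc]
        have h2 : r ^ (α - (n : ℝ) + δ) = r ^ (δ + 1) * (r ^ ee)⁻¹ := by
          rw [← Real.rpow_neg hr0.le, ← Real.rpow_add hr0]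
          congr 1
          rw [hee]; ring
        rw [h1, h2, Real.mul_rpow hc.le hr0.le, mul_inv, div_eq_mul_inv]
        generalize c ^ ee = A
        generalize r ^ ee = B
        generalize r ^ (δ + 1) = D
        ring
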